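/- For every ε > 0 there is a constant C_ε such that for all positive integers q, q_i and every integer m, |∑_{b ∈ (ℤ/q_iℤ)^*} g(a,q;b,q_i) e(-m b/q_i)| ≤ C_ε · q_i^ε, uniformly in a ∈ (ℤ/qℤ)^* and m. -/

import Mathlib

open scoped Real

/-- e(t) = exp(2πit). -/
noncomputable def eChar (t : ℝ) : ℂ := Complex.exp (2 * π * Complex.I * t)

open Finset

lemma eChar_add (s t : ℝ) : eChar (s + t) = eChar s * eChar t := by
  simp [eChar, ← Complex.exp_add, mul_add]

lemma eChar_int (n : ℤ) : eChar n = 1 := by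
  have := Complex.exp_int_mul_two_pi_mul_I n
  simpa [eChar, mul_comm, mul_left_comm, mul_assoc] using this

lemma norm_eChar (t : ℝ) : ‖eChar t‖ = 1 := by
  have : (2 * π * Complex.I * t) = ((2 * π * t : ℝ) : ℂ) * Complex.I := by
    push_cast; ring
  rw [eChar, this, Complex.norm_exp_ofReal_mul_I]

lemma eChar_pow (c : ℕ) (t : ℝ) : eChar (c * t) = (eChar t) ^ c := by
  rw [eChar, eChar, ← Complex.exp_nat_mul]; push_cast; ring_nf

lemma eChar_eq_one_iff {t : ℝ} : eChar t = 1 ↔ ∃ n : ℤ, t = n := by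
  rw [eChar, Complex.exp_eq_one_iff]
  constructor
  · rintro ⟨n, hn⟩
    refine ⟨n, ?_⟩
    have h2 : (2 * (π:ℂ) * Complex.I) ≠ 0 := by
      simp [Real.pi_ne_zero, Complex.I_ne_zero]
    have hn' : (2 * (π:ℂ) * Complex.I) * t = (2 * (π:ℂ) * Complex.I) * n := by
      rw [hn]; ring
    have : (t : ℂ) = n := mul_left_cancel₀ h2 hn'
    exact_mod_cast this
  · rintro ⟨n, hn⟩
    exact ⟨n, by rw [hn]; push_cast; ring⟩

lemma fullSum (t : ℕ) (ht : 0 < t) (n : ℤ) :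
    ∑ c ∈ Finset.range t, eChar ((c : ℝ) * n / t) = if (t:ℤ) ∣ n then (t:ℂ) else 0 := by
  have ht' : (t : ℝ) ≠ 0 := Nat.cast_ne_zero.mpr ht.ne'
  have hterm : ∀ c : ℕ, eChar ((c : ℝ) * n / t) = (eChar ((n:ℝ)/t)) ^ c := by
    intro c; rw [← eChar_pow]; ring_nf
  simp_rw [hterm]
  by_cases hd : (t:ℤ) ∣ n
  · obtain ⟨k, hk⟩ := hd
    have : ((n:ℝ)/t) = (k : ℤ) := by
      rw [hk]; push_cast; field_simp
    rw [this, eChar_int, if_pos ⟨k, hk⟩]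
    simp
  · have hζ : eChar ((n:ℝ)/t) ≠ 1 := by
      intro h
      obtain ⟨k, hk⟩ := eChar_eq_one_iff.mp h
      apply hd
      refine ⟨k, ?_⟩
      have : (n : ℝ) = t * k := by
        field_simp at hk; linarith [hk]
      exact_mod_cast this
    rw [geom_sum_eq hζ]
    have htop : (eChar ((n:ℝ)/t)) ^ t = 1 := by
      rw [← eChar_pow]
      have : (t:ℝ) * ((n:ℝ)/t) = (n:ℤ) := by field_simp
      rw [this, eChar_int]
    rw [htop, if_neg hd]
    simp

open ArithmeticFunction in
lemma moebius_indicator (m : ℕ) :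
    (∑ d ∈ m.divisors, ((moebius d : ℤ) : ℂ)) = if m = 1 then 1 else 0 := by
  have h : (∑ d ∈ m.divisors, (moebius d : ℤ)) = if m = 1 then 1 else 0 := by
    have := congrArg (fun f : ArithmeticFunction ℤ => f m) moebius_mul_coe_zeta
    simp only [coe_mul_zeta_apply, one_apply] at this
    exact this
  calc (∑ d ∈ m.divisors, ((moebius d : ℤ) : ℂ))
      = (((∑ d ∈ m.divisors, moebius d : ℤ)) : ℂ) := by push_cast; rfl
    _ = _ := by rw [h]; split <;> simp

lemma unit_sum_eq (q : ℕ) [NeZero q] (f : ℕ → ℂ) :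
    ∑ b : (ZMod q)ˣ, f ((b : ZMod q).val)
      = ∑ b ∈ (Finset.range q).filter (fun b => Nat.Coprime b q), f b := by
  refine Finset.sum_bij (fun b _ => (b : ZMod q).val) ?_ ?_ ?_ ?_
  · intro b _
    simp only [Finset.mem_filter, Finset.mem_range]
    exact ⟨ZMod.val_lt _, ZMod.val_coe_unit_coprime b⟩
  · intro a _ b _ h
    exact Units.ext (ZMod.val_injective q h)
  · intro b hb
    simp only [Finset.mem_filter, Finset.mem_range] at hb
    refine ⟨ZMod.unitOfCoprime b hb.2, Finset.mem_univ _, ?_⟩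
    show ((ZMod.unitOfCoprime b hb.2 : (ZMod q)ˣ) : ZMod q).val = b
    rw [ZMod.coe_unitOfCoprime b hb.2, ZMod.val_cast_of_lt hb.1]
  · intros; rfl

open ArithmeticFunction in
lemma ramanujan_bound (q : ℕ) (hq : 0 < q) [NeZero q] (n : ℤ) :
    ‖∑ b : (ZMod q)ˣ, eChar (((b : ZMod q).val : ℝ) * (n:ℝ) / q)‖
      ≤ ∑ e ∈ q.divisors, if (e:ℤ) ∣ n then (e:ℝ) else 0 := by
  have hq0 : q ≠ 0 := hq.ne'
  rw [unit_sum_eq q (fun b => eChar ((b : ℝ) * (n:ℝ) / q))]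
  -- insert moebius indicator
  have step1 : ∑ b ∈ (Finset.range q).filter (fun b => Nat.Coprime b q),
        eChar ((b : ℝ) * (n:ℝ) / q)
      = ∑ b ∈ Finset.range q, (∑ d ∈ (Nat.gcd b q).divisors, ((moebius d : ℤ) : ℂ))
          * eChar ((b : ℝ) * (n:ℝ) / q) := by
    rw [Finset.sum_filter]
    refine Finset.sum_congr rfl fun b _ => ?_
    rw [moebius_indicator]
    by_cases h : Nat.Coprime b q
    · rw [if_pos h, if_pos h, one_mul]
    · rw [if_neg h, if_neg h, zero_mul]
  -- divisors of gcd
  have step2 : ∀ b : ℕ, (Nat.gcd b q).divisors = q.divisors.filter (· ∣ b) := by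
    intro b
    ext d
    simp only [Nat.mem_divisors, Finset.mem_filter]
    constructor
    · rintro ⟨hd, -⟩
      exact ⟨⟨(Nat.dvd_gcd_iff.mp hd).2, hq0⟩, (Nat.dvd_gcd_iff.mp hd).1⟩
    · rintro ⟨⟨hdq, -⟩, hdb⟩
      exact ⟨Nat.dvd_gcd hdb hdq, fun h => hq0 (Nat.eq_zero_of_gcd_eq_zero_right h)⟩
  -- swap sums
  have step3 : ∑ b ∈ Finset.range q, (∑ d ∈ (Nat.gcd b q).divisors, ((moebius d : ℤ) : ℂ))
          * eChar ((b : ℝ) * (n:ℝ) / q)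
      = ∑ d ∈ q.divisors, ((moebius d : ℤ) : ℂ)
          * ∑ b ∈ (Finset.range q).filter (fun b => d ∣ b), eChar ((b : ℝ) * (n:ℝ) / q) := by
    simp_rw [step2, Finset.sum_filter, Finset.sum_mul, Finset.mul_sum]
    rw [Finset.sum_comm]
    refine Finset.sum_congr rfl fun d _ => Finset.sum_congr rfl fun b _ => ?_
    by_cases h : d ∣ b
    · simp [h]
    · simp [h]
  -- reindex inner sum
  have step4 : ∀ d ∈ q.divisors,
      ∑ b ∈ (Finset.range q).filter (fun b => d ∣ b), eChar ((b : ℝ) * (n:ℝ) / q)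
        = if ((q/d : ℕ) : ℤ) ∣ n then ((q/d : ℕ) : ℂ) else 0 := by
    intro d hd
    obtain ⟨hdq, -⟩ := Nat.mem_divisors.mp hd
    have hd0 : 0 < d := Nat.pos_of_mem_divisors hd
    have hqd0 : 0 < q / d := Nat.div_pos (Nat.le_of_dvd hq hdq) hd0
    rw [← fullSum (q/d) hqd0 n]
    refine Finset.sum_bij' (fun b _ => b / d) (fun c _ => c * d) ?_ ?_ ?_ ?_ ?_
    · intro b hb
      simp only [Finset.mem_filter, Finset.mem_range] at hb
      exact Finset.mem_range.mpr (Nat.div_lt_div_of_lt_of_dvd hdq hb.1)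
    · intro c hc
      simp only [Finset.mem_range] at hc
      refine Finset.mem_filter.mpr ⟨Finset.mem_range.mpr ?_, dvd_mul_left d c⟩
      calc c * d < (q/d) * d := by exact (Nat.mul_lt_mul_right hd0).mpr hc
      _ = q := Nat.div_mul_cancel hdq
    · intro b hb
      simp only [Finset.mem_filter, Finset.mem_range] at hb
      exact Nat.div_mul_cancel hb.2
    · intro c _
      exact Nat.mul_div_cancel c hd0
    · intro b hb
      simp only [Finset.mem_filter, Finset.mem_range] at hb
      congr 1
      have hb2 := hb.2
      have hd0' : (d:ℝ) ≠ 0 := Nat.cast_ne_zero.mpr hd0.ne'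
      have hq0' : (q:ℝ) ≠ 0 := Nat.cast_ne_zero.mpr hq0
      rw [Nat.cast_div hb.2 hd0', Nat.cast_div hdq hd0']
      field_simp
  have step5 : ∑ b ∈ (Finset.range q).filter (fun b => Nat.Coprime b q),
        eChar ((b : ℝ) * (n:ℝ) / q)
      = ∑ d ∈ q.divisors, ((moebius d : ℤ) : ℂ)
          * (if ((q/d : ℕ) : ℤ) ∣ n then ((q/d : ℕ) : ℂ) else 0) := by
    rw [step1, step3]
    exact Finset.sum_congr rfl fun d hd => by rw [step4 d hd]
  rw [step5]
  calc ‖∑ d ∈ q.divisors, ((moebius d : ℤ) : ℂ)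
          * (if ((q/d : ℕ) : ℤ) ∣ n then ((q/d : ℕ) : ℂ) else 0)‖
      ≤ ∑ d ∈ q.divisors, ‖((moebius d : ℤ) : ℂ)
          * (if ((q/d : ℕ) : ℤ) ∣ n then ((q/d : ℕ) : ℂ) else 0)‖ := norm_sum_le _ _
    _ ≤ ∑ d ∈ q.divisors, (if ((q/d : ℕ) : ℤ) ∣ n then ((q/d : ℕ) : ℝ) else 0) := by
        refine Finset.sum_le_sum fun d _ => ?_
        rw [norm_mul]
        have h1 : ‖((moebius d : ℤ) : ℂ)‖ ≤ 1 := by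
          rw [Complex.norm_intCast]
          exact_mod_cast abs_moebius_le_one
        have h2 : ‖(if ((q/d : ℕ) : ℤ) ∣ n then ((q/d : ℕ) : ℂ) else 0)‖
            = (if ((q/d : ℕ) : ℤ) ∣ n then ((q/d : ℕ) : ℝ) else 0) := by
          split <;> simp
        rw [h2]
        calc ‖((moebius d : ℤ) : ℂ)‖ * _ ≤ 1 * (if ((q/d : ℕ) : ℤ) ∣ n then ((q/d : ℕ) : ℝ) else 0) := by
              refine mul_le_mul_of_nonneg_right h1 ?_
              split <;> positivity
          _ = _ := one_mul _
    _ = ∑ e ∈ q.divisors, if (e:ℤ) ∣ n then (e:ℝ) else 0 :=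
        Nat.sum_div_divisors q (fun e => if (e:ℤ) ∣ n then (e:ℝ) else 0)

open scoped Classical in
lemma fiber_card_eq {G H : Type*} [Group G] [Group H] [Fintype G]
    (f : G →* H) (hf : Function.Surjective f) (h1 h2 : H) :
    (univ.filter (fun g => f g = h1)).card = (univ.filter (fun g => f g = h2)).card := by
  obtain ⟨g1, hg1⟩ := hf h1
  obtain ⟨g2, hg2⟩ := hf h2
  refine Finset.card_bij (fun g _ => g2 * g1⁻¹ * g) ?_ ?_ ?_
  · intro g hg
    simp only [mem_filter, mem_univ, true_and] at hg ⊢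
    simp [map_mul, hg, hg1, hg2]
  · intro a _ b _ hab
    exact mul_left_cancel hab
  · intro g' hg'
    simp only [mem_filter, mem_univ, true_and] at hg'
    refine ⟨g1 * g2⁻¹ * g', ?_, by group⟩
    simp only [mem_filter, mem_univ, true_and, map_mul, map_inv, hg', hg1, hg2]
    group

open scoped Classical in
lemma fiber_card_mul {G H : Type*} [Group G] [Group H] [Fintype G] [Fintype H]
    (f : G →* H) (hf : Function.Surjective f) (h : H) :
    (univ.filter (fun g => f g = h)).card * Fintype.card H = Fintype.card G := by
  have h1 : (Fintype.card G : ℕ) = ∑ h' : H, (univ.filter (fun g => f g = h')).card := by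
    rw [← Finset.card_univ (α := G)]
    exact Finset.card_eq_sum_card_fiberwise (fun g _ => mem_univ _)
  rw [h1]
  rw [Finset.sum_congr rfl (fun h' _ => fiber_card_eq f hf h' h)]
  simp [Finset.sum_const, Finset.card_univ, mul_comm]

open scoped Classical in
lemma count_units_cong (N e : ℕ) [NeZero N] (he : e ∣ N) (c : ℤ) :
    (univ.filter (fun x : (ZMod N)ˣ =>
        (e:ℤ) ∣ (((x : ZMod N).val : ℤ) - c))).card * e.totient ≤ N.totient := by
  haveI : NeZero e := ⟨fun h => (NeZero.ne N) (by simpa [h] using he)⟩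
  have hcond : ∀ x : (ZMod N)ˣ,
      ((e:ℤ) ∣ (((x : ZMod N).val : ℤ) - c)) ↔
        ((ZMod.unitsMap he x : ZMod e) = (c : ZMod e)) := by
    intro x
    rw [← ZMod.intCast_zmod_eq_zero_iff_dvd]
    push_cast
    rw [sub_eq_zero, ZMod.unitsMap_def]
    simp only [Units.coe_map, MonoidHom.coe_coe, ZMod.castHom_apply]
    rw [← ZMod.natCast_val]
  simp_rw [hcond]
  by_cases hne : (univ.filter (fun x : (ZMod N)ˣ =>
      ((ZMod.unitsMap he x : ZMod e) = (c : ZMod e)))).Nonempty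
  · obtain ⟨x0, hx0⟩ := hne
    simp only [mem_filter, mem_univ, true_and] at hx0
    have heq : (univ.filter (fun x : (ZMod N)ˣ =>
        ((ZMod.unitsMap he x : ZMod e) = (c : ZMod e))))
        = (univ.filter (fun x : (ZMod N)ˣ => ZMod.unitsMap he x = ZMod.unitsMap he x0)) := by
      refine Finset.filter_congr fun x _ => ?_
      rw [← hx0]
      exact Units.ext_iff.symm
    rw [heq]
    have := fiber_card_mul (ZMod.unitsMap he) (ZMod.unitsMap_surjective he)
      (ZMod.unitsMap he x0)
    rw [ZMod.card_units_eq_totient, ZMod.card_units_eq_totient] at this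
    convert le_of_eq this using 2
    congr!
    congr 1; ext x; simp
  · rw [Finset.not_nonempty_iff_eq_empty.mp hne]
    simp

lemma count_sum_bound (N e : ℕ) [NeZero N] (he : e ∣ N) (c : ℤ) :
    ∑ x : (ZMod N)ˣ, (if (e:ℤ) ∣ (((x : ZMod N).val : ℤ) - c) then (e:ℝ) else 0)
      ≤ (N.totient : ℝ) * ((e:ℝ) / (e.totient : ℝ)) := by
  classical
  haveI : NeZero e := ⟨fun h => (NeZero.ne N) (by simpa [h] using he)⟩
  have hφe : (0:ℝ) < (e.totient : ℝ) := by
    exact_mod_cast Nat.totient_pos.mpr (Nat.pos_of_ne_zero (NeZero.ne e))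
  have h1 : ∑ x : (ZMod N)ˣ, (if (e:ℤ) ∣ (((x : ZMod N).val : ℤ) - c) then (e:ℝ) else 0)
      = ((univ.filter (fun x : (ZMod N)ˣ =>
          (e:ℤ) ∣ (((x : ZMod N).val : ℤ) - c))).card : ℝ) * (e:ℝ) := by
    rw [← Finset.sum_filter, Finset.sum_const, nsmul_eq_mul]
  rw [h1]
  have h2 := count_units_cong N e he c
  have h2' : ((univ.filter (fun x : (ZMod N)ˣ =>
      (e:ℤ) ∣ (((x : ZMod N).val : ℤ) - c))).card : ℝ) * (e.totient : ℝ)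
      ≤ (N.totient : ℝ) := by exact_mod_cast h2
  rw [mul_comm (N.totient : ℝ), div_mul_eq_mul_div, le_div_iff₀ hφe]
  calc _ = ((univ.filter (fun x : (ZMod N)ˣ =>
        (e:ℤ) ∣ (((x : ZMod N).val : ℤ) - c))).card : ℝ) * (e.totient : ℝ) * (e:ℝ) := by
        ring
    _ ≤ (N.totient : ℝ) * (e:ℝ) := by
        exact mul_le_mul_of_nonneg_right h2' (Nat.cast_nonneg e)
    _ = (e:ℝ) * (N.totient : ℝ) := by ring

lemma le_tau_mul_totient {n : ℕ} (hn : n ≠ 0) : n ≤ n.divisors.card * n.totient := by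
  conv_lhs => rw [← Nat.factorization_prod_pow_eq_self hn]
  rw [Nat.card_divisors hn, Nat.totient_eq_prod_factorization hn]
  rw [Finsupp.prod, Finsupp.prod, Nat.support_factorization, ← Finset.prod_mul_distrib]
  refine Finset.prod_le_prod' fun p hp => ?_
  have hp2 : 2 ≤ p := (Nat.prime_of_mem_primeFactors hp).two_le
  have ha : 1 ≤ n.factorization p := by
    rw [← Nat.support_factorization] at hp
    exact Nat.one_le_iff_ne_zero.mpr (Finsupp.mem_support_iff.mp hp)
  set a := n.factorization p with hadef
  calc p ^ a = p * p ^ (a - 1) := by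
        rw [← pow_succ']
        congr 1
        omega
    _ ≤ (2 * (p - 1)) * p ^ (a - 1) := by
        have : p ≤ 2 * (p - 1) := by omega
        exact Nat.mul_le_mul_right _ this
    _ ≤ ((a + 1) * (p - 1)) * p ^ (a - 1) := by
        have : 2 ≤ a + 1 := by omega
        exact Nat.mul_le_mul_right _ (Nat.mul_le_mul_right _ this)
    _ = (a + 1) * (p ^ (a - 1) * (p - 1)) := by ring

lemma tau_mono {e n : ℕ} (hn : n ≠ 0) (h : e ∣ n) : e.divisors.card ≤ n.divisors.card :=
  Finset.card_le_card (Nat.divisors_subset_of_dvd hn h)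

lemma divisor_bound {δ : ℝ} (hδ : 0 < δ) :
    ∃ C : ℝ, 1 ≤ C ∧ ∀ n : ℕ, n ≠ 0 → (n.divisors.card : ℝ) ≤ C * (n : ℝ) ^ δ := by
  set c := δ * Real.log 2 with hc
  have hc0 : 0 < c := mul_pos hδ (Real.log_pos one_lt_two)
  set M := 1 + 1/c with hM
  have hM1 : 1 ≤ M := by
    rw [hM]
    have : 0 < 1/c := by positivity
    linarith
  set B := ⌈(2:ℝ) ^ (1/δ)⌉₊ + 1 with hB
  refine ⟨M ^ B, one_le_pow₀ hM1, fun n hn => ?_⟩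
  -- pointwise bound
  have key : ∀ p ∈ n.primeFactors,
      ((n.factorization p + 1 : ℕ) : ℝ)
        ≤ (if (p:ℝ) ^ δ < 2 then M else 1) * (((p:ℝ) ^ (n.factorization p)) ^ δ) := by
    intro p hp
    have hp2 : (2:ℝ) ≤ (p:ℝ) := by
      exact_mod_cast (Nat.prime_of_mem_primeFactors hp).two_le
    have hppos : (0:ℝ) < p := by linarith
    set a := n.factorization p with hadef
    have hbase : ((p:ℝ) ^ a) ^ δ = ((p:ℝ) ^ δ) ^ a := by
      rw [← Real.rpow_natCast ((p:ℝ)) a, ← Real.rpow_natCast ((p:ℝ) ^ δ) a,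
        ← Real.rpow_mul hppos.le, ← Real.rpow_mul hppos.le, mul_comm]
    by_cases hsmall : (p:ℝ) ^ δ < 2
    · rw [if_pos hsmall]
      have h2aδ : Real.exp (a * c) ≤ ((p:ℝ) ^ a) ^ δ := by
        have h1 : (2:ℝ) ^ (a:ℝ) ≤ (p:ℝ) ^ (a:ℝ) :=
          Real.rpow_le_rpow (by norm_num) hp2 (Nat.cast_nonneg a)
        have h2 : ((2:ℝ) ^ (a:ℝ)) ^ δ ≤ ((p:ℝ) ^ (a:ℝ)) ^ δ :=
          Real.rpow_le_rpow (Real.rpow_nonneg (by norm_num) _) h1 hδ.le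
        calc Real.exp (a * c) = (2:ℝ) ^ ((a:ℝ) * δ) := by
              rw [hc, Real.rpow_def_of_pos (by norm_num : (0:ℝ) < 2)]
              congr 1
              ring
          _ = ((2:ℝ) ^ (a:ℝ)) ^ δ := by rw [← Real.rpow_mul (by norm_num)]
          _ ≤ ((p:ℝ) ^ (a:ℝ)) ^ δ := h2
          _ = ((p:ℝ) ^ a) ^ δ := by rw [Real.rpow_natCast]
      have hexp : 1 + (a:ℝ) * c ≤ Real.exp ((a:ℝ) * c) := by
        have := Real.add_one_le_exp ((a:ℝ) * c)
        linarith
      have hstep : ((a:ℝ) + 1) ≤ M * (1 + (a:ℝ) * c) := by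
        rw [hM]
        have h1 : (0:ℝ) ≤ (a:ℝ) := Nat.cast_nonneg a
        have hex : (1 + 1/c) * (1 + (a:ℝ)*c) = 1 + (a:ℝ)*c + 1/c + (a:ℝ) := by
          field_simp
          ring
        rw [hex]
        have : (0:ℝ) ≤ (a:ℝ) * c := by positivity
        have : (0:ℝ) < 1/c := by positivity
        linarith
      have hMpos : (0:ℝ) < M := by linarith
      calc ((a + 1 : ℕ) : ℝ) = (a:ℝ) + 1 := by push_cast; ring
        _ ≤ M * (1 + (a:ℝ)*c) := hstep
        _ ≤ M * Real.exp ((a:ℝ)*c) := mul_le_mul_of_nonneg_left hexp hMpos.le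
        _ ≤ M * (((p:ℝ) ^ a) ^ δ) := mul_le_mul_of_nonneg_left h2aδ hMpos.le
    · rw [if_neg hsmall, one_mul]
      push_neg at hsmall
      have ha1 : ((a:ℝ) + 1) ≤ 2 ^ (a:ℕ) := by
        exact_mod_cast Nat.succ_le_of_lt (Nat.lt_two_pow_self (n := a))
      calc ((a + 1 : ℕ) : ℝ) = (a:ℝ) + 1 := by push_cast; ring
        _ ≤ (2:ℝ) ^ (a:ℕ) := ha1
        _ ≤ ((p:ℝ) ^ δ) ^ (a:ℕ) := pow_le_pow_left₀ (by norm_num) hsmall a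
        _ = ((p:ℝ) ^ a) ^ δ := hbase.symm
  -- assemble
  have htau : (n.divisors.card : ℝ) = ∏ p ∈ n.primeFactors, ((n.factorization p + 1 : ℕ) : ℝ) := by
    have h1 : n.divisors.card = ∏ p ∈ n.primeFactors, (n.factorization p + 1) := by
      rw [Nat.card_divisors hn]
    rw [h1]
    push_cast
    try rfl
  have hnat : ∏ p ∈ n.primeFactors, p ^ n.factorization p = n := by
    conv_rhs => rw [← Nat.factorization_prod_pow_eq_self hn]
    rfl
  have hprod : ∏ p ∈ n.primeFactors, (((p:ℝ) ^ (n.factorization p)) ^ δ) = (n:ℝ) ^ δ := by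
    rw [Real.finset_prod_rpow _ _ (fun p _ => by positivity) δ]
    congr 1
    calc ∏ p ∈ n.primeFactors, ((p:ℝ) ^ (n.factorization p))
        = ((∏ p ∈ n.primeFactors, p ^ n.factorization p : ℕ) : ℝ) := by push_cast; rfl
      _ = (n : ℝ) := by rw [hnat]
  have hite : ∏ p ∈ n.primeFactors, (if (p:ℝ) ^ δ < 2 then M else 1) ≤ M ^ B := by
    classical
    have h1 : ∏ p ∈ n.primeFactors, (if (p:ℝ) ^ δ < 2 then M else 1)
        = M ^ (n.primeFactors.filter (fun p : ℕ => (p:ℝ) ^ δ < 2)).card := by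
      rw [← Finset.prod_filter_mul_prod_filter_not n.primeFactors
            (fun p : ℕ => (p:ℝ) ^ δ < 2) (fun p : ℕ => if (p:ℝ) ^ δ < 2 then M else (1:ℝ))]
      rw [Finset.prod_congr rfl (fun p hp => if_pos (Finset.mem_filter.mp hp).2),
        Finset.prod_congr rfl (fun p hp => if_neg (Finset.mem_filter.mp hp).2),
        Finset.prod_const, Finset.prod_const, one_pow, mul_one]
    rw [h1]
    have hsub : (n.primeFactors.filter (fun p : ℕ => (p:ℝ) ^ δ < 2)) ⊆ Finset.range B := by
      intro p hp
      obtain ⟨hp1, hp2⟩ := Finset.mem_filter.mp hp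
      have hlt : (p:ℝ) < (2:ℝ) ^ (1/δ) := by
        have h3 := Real.rpow_lt_rpow (Real.rpow_nonneg (Nat.cast_nonneg p) δ) hp2
          (one_div_pos.mpr hδ)
        rwa [← Real.rpow_mul (Nat.cast_nonneg p), mul_one_div, div_self hδ.ne',
          Real.rpow_one] at h3
      have hle : (2:ℝ) ^ (1/δ) ≤ ((⌈(2:ℝ) ^ (1/δ)⌉₊ : ℕ) : ℝ) := Nat.le_ceil _
      have hpB : p < ⌈(2:ℝ) ^ (1/δ)⌉₊ := by exact_mod_cast lt_of_lt_of_le hlt hle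
      exact Finset.mem_range.mpr (Nat.lt_succ_of_lt hpB)
    have hcard : (n.primeFactors.filter (fun p : ℕ => (p:ℝ) ^ δ < 2)).card ≤ B :=
      le_trans (Finset.card_le_card hsub) (by rw [Finset.card_range])
    exact pow_le_pow_right₀ hM1 hcard
  calc (n.divisors.card : ℝ)
      = ∏ p ∈ n.primeFactors, ((n.factorization p + 1 : ℕ) : ℝ) := htau
    _ ≤ ∏ p ∈ n.primeFactors,
          ((if (p:ℝ) ^ δ < 2 then M else 1) * (((p:ℝ) ^ (n.factorization p)) ^ δ)) :=
        Finset.prod_le_prod (fun p _ => by positivity) key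
    _ = (∏ p ∈ n.primeFactors, (if (p:ℝ) ^ δ < 2 then M else 1))
          * ∏ p ∈ n.primeFactors, (((p:ℝ) ^ (n.factorization p)) ^ δ) :=
        Finset.prod_mul_distrib
    _ ≤ M ^ B * (n:ℝ) ^ δ := by
        rw [hprod]
        exact mul_le_mul_of_nonneg_right hite (Real.rpow_nonneg (Nat.cast_nonneg n) δ)

/-- The Gauss-type sum g(a,q;b,r) from the Waring–Goldbach major-arc analysis. -/
noncomputable def gaussG (k q r : ℕ) [NeZero (Nat.lcm q r)] (a b : ℕ) : ℂ :=
  (Nat.totient (Nat.lcm q r) : ℂ)⁻¹ *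
    ∑ x : (ZMod (Nat.lcm q r))ˣ,
      eChar ((a * ((x : ZMod (Nat.lcm q r)).val : ℝ) ^ k) / q +
        (b * ((x : ZMod (Nat.lcm q r)).val : ℝ)) / r)

/-- Gauss sum bound: for every ε > 0 there is C_ε so that uniformly in a ∈ U_q and m,
`|∑_{b ∈ U_{qᵢ}} g(a,q;b,qᵢ) e(-mb/qᵢ)| ≤ C_ε · qᵢ^ε`. -/

theorem gauss_sum_unit_average_eps_bound (k : ℕ) (hk : 2 ≤ k) (ε : ℝ) (hε : 0 < ε) :
    ∃ C : ℝ, ∀ q qi : ℕ, 0 < q → 0 < qi →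
      ∀ [NeZero qi] [NeZero (Nat.lcm q qi)], ∀ (a : (ZMod q)ˣ) (m : ℤ),
      ‖∑ b : (ZMod qi)ˣ,
          gaussG k q qi ((a : ZMod q)).val ((b : ZMod qi)).val *
            eChar (-(m * (((b : ZMod qi)).val : ℝ)) / qi)‖ ≤ C * (qi : ℝ) ^ ε := by
  obtain ⟨C, hC1, hC⟩ := divisor_bound (δ := ε/2) (by positivity)
  refine ⟨C^2, fun q qi hq hqi => ?_⟩
  intro _ _ a m
  classical
  have hqiL : qi ∣ Nat.lcm q qi := Nat.dvd_lcm_right q qi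
  have hL0 : 0 < Nat.lcm q qi := Nat.pos_of_ne_zero (NeZero.ne _)
  have hqi0 : qi ≠ 0 := hqi.ne'
  have hφL : (0:ℝ) < (Nat.lcm q qi).totient := by
    exact_mod_cast Nat.totient_pos.mpr hL0
  -- step A : rewrite the sum
  have hswap : (∑ b : (ZMod qi)ˣ,
        gaussG k q qi ((a : ZMod q)).val ((b : ZMod qi)).val *
          eChar (-(m * (((b : ZMod qi)).val : ℝ)) / qi))
      = ((Nat.lcm q qi).totient : ℂ)⁻¹ * ∑ x : (ZMod (Nat.lcm q qi))ˣ,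
          eChar ((((a : ZMod q)).val * ((x : ZMod (Nat.lcm q qi)).val : ℝ) ^ k) / q) *
          ∑ b : (ZMod qi)ˣ,
            eChar ((((b : ZMod qi)).val : ℝ)
              * (((((x : ZMod (Nat.lcm q qi)).val : ℤ) - m : ℤ)) : ℝ) / qi) := by
    simp only [gaussG]
    calc ∑ b : (ZMod qi)ˣ,
          (((Nat.lcm q qi).totient : ℂ)⁻¹ * ∑ x : (ZMod (Nat.lcm q qi))ˣ,
            eChar ((((a : ZMod q)).val * ((x : ZMod (Nat.lcm q qi)).val : ℝ) ^ k) / q +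
              ((((b : ZMod qi)).val : ℝ) * ((x : ZMod (Nat.lcm q qi)).val : ℝ)) / qi))
            * eChar (-(m * (((b : ZMod qi)).val : ℝ)) / qi)
        = ((Nat.lcm q qi).totient : ℂ)⁻¹ * ∑ b : (ZMod qi)ˣ, ∑ x : (ZMod (Nat.lcm q qi))ˣ,
            eChar ((((a : ZMod q)).val * ((x : ZMod (Nat.lcm q qi)).val : ℝ) ^ k) / q +
              ((((b : ZMod qi)).val : ℝ) * ((x : ZMod (Nat.lcm q qi)).val : ℝ)) / qi)
              * eChar (-(m * (((b : ZMod qi)).val : ℝ)) / qi) := by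
          rw [Finset.mul_sum]
          refine Finset.sum_congr rfl fun b _ => ?_
          rw [mul_assoc, Finset.sum_mul]
      _ = ((Nat.lcm q qi).totient : ℂ)⁻¹ * ∑ x : (ZMod (Nat.lcm q qi))ˣ,
            ∑ b : (ZMod qi)ˣ,
            eChar ((((a : ZMod q)).val * ((x : ZMod (Nat.lcm q qi)).val : ℝ) ^ k) / q +
              ((((b : ZMod qi)).val : ℝ) * ((x : ZMod (Nat.lcm q qi)).val : ℝ)) / qi)
              * eChar (-(m * (((b : ZMod qi)).val : ℝ)) / qi) := by
          rw [Finset.sum_comm]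
      _ = _ := by
          congr 1
          refine Finset.sum_congr rfl fun x _ => ?_
          rw [Finset.mul_sum]
          refine Finset.sum_congr rfl fun b _ => ?_
          rw [eChar_add, mul_assoc]
          congr 1
          rw [← eChar_add]
          congr 1
          push_cast
          ring
  rw [hswap]
  have step1 : ‖((Nat.lcm q qi).totient : ℂ)⁻¹ * ∑ x : (ZMod (Nat.lcm q qi))ˣ,
          eChar ((((a : ZMod q)).val * ((x : ZMod (Nat.lcm q qi)).val : ℝ) ^ k) / q) *
          ∑ b : (ZMod qi)ˣ,
            eChar ((((b : ZMod qi)).val : ℝ)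
              * (((((x : ZMod (Nat.lcm q qi)).val : ℤ) - m : ℤ)) : ℝ) / qi)‖
      ≤ (((Nat.lcm q qi).totient : ℝ))⁻¹ * ∑ x : (ZMod (Nat.lcm q qi))ˣ,
          ∑ e ∈ qi.divisors,
            (if (e:ℤ) ∣ (((x : ZMod (Nat.lcm q qi)).val : ℤ) - m) then (e:ℝ) else 0) := by
    rw [norm_mul, norm_inv, Complex.norm_natCast]
    refine mul_le_mul_of_nonneg_left ?_ (by positivity)
    refine (norm_sum_le _ _).trans (Finset.sum_le_sum fun x _ => ?_)
    rw [norm_mul, norm_eChar, one_mul]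
    exact ramanujan_bound qi hqi _
  refine step1.trans ?_
  have step2 : ∑ x : (ZMod (Nat.lcm q qi))ˣ, ∑ e ∈ qi.divisors,
        (if (e:ℤ) ∣ (((x : ZMod (Nat.lcm q qi)).val : ℤ) - m) then (e:ℝ) else 0)
      ≤ ((Nat.lcm q qi).totient : ℝ) * ∑ e ∈ qi.divisors, ((e:ℝ) / (e.totient : ℝ)) := by
    rw [Finset.sum_comm, Finset.mul_sum]
    refine Finset.sum_le_sum fun e he => ?_
    exact count_sum_bound (Nat.lcm q qi) e ((Nat.dvd_of_mem_divisors he).trans hqiL) m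
  have step3 : (((Nat.lcm q qi).totient : ℝ))⁻¹ * (∑ x : (ZMod (Nat.lcm q qi))ˣ,
        ∑ e ∈ qi.divisors,
          (if (e:ℤ) ∣ (((x : ZMod (Nat.lcm q qi)).val : ℤ) - m) then (e:ℝ) else 0))
      ≤ ∑ e ∈ qi.divisors, ((e:ℝ) / (e.totient : ℝ)) := by
    rw [inv_mul_le_iff₀ hφL]
    calc _ ≤ ((Nat.lcm q qi).totient : ℝ) * ∑ e ∈ qi.divisors, ((e:ℝ) / (e.totient : ℝ)) :=
          step2
      _ = _ := by ring
  refine step3.trans ?_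
  have step4 : ∑ e ∈ qi.divisors, ((e:ℝ) / (e.totient : ℝ))
      ≤ (qi.divisors.card : ℝ) * (qi.divisors.card : ℝ) := by
    calc ∑ e ∈ qi.divisors, ((e:ℝ) / (e.totient : ℝ))
        ≤ ∑ _e ∈ qi.divisors, (qi.divisors.card : ℝ) := by
          refine Finset.sum_le_sum fun e he => ?_
          have he0 : e ≠ 0 := (Nat.pos_of_mem_divisors he).ne'
          have hφe : (0:ℝ) < (e.totient : ℝ) := by
            exact_mod_cast Nat.totient_pos.mpr (Nat.pos_of_ne_zero he0)
          rw [div_le_iff₀ hφe]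
          calc (e:ℝ) ≤ (e.divisors.card : ℝ) * (e.totient : ℝ) := by
                exact_mod_cast le_tau_mul_totient he0
            _ ≤ (qi.divisors.card : ℝ) * (e.totient : ℝ) := by
                have := tau_mono hqi0 (Nat.dvd_of_mem_divisors he)
                exact mul_le_mul_of_nonneg_right (by exact_mod_cast this) hφe.le
      _ = (qi.divisors.card : ℝ) * (qi.divisors.card : ℝ) := by
          rw [Finset.sum_const, nsmul_eq_mul]
  refine step4.trans ?_
  have hτ := hC qi hqi0
  have hτ0 : (0:ℝ) ≤ (qi.divisors.card : ℝ) := by positivity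
  calc (qi.divisors.card : ℝ) * (qi.divisors.card : ℝ)
      ≤ (C * (qi:ℝ) ^ (ε/2)) * (C * (qi:ℝ) ^ (ε/2)) :=
        mul_le_mul hτ hτ hτ0 (le_trans hτ0 hτ)
    _ = C^2 * ((qi:ℝ) ^ (ε/2) * (qi:ℝ) ^ (ε/2)) := by ring
    _ = C^2 * (qi:ℝ) ^ ε := by
        rw [← Real.rpow_add (by exact_mod_cast hqi : (0:ℝ) < qi)]
        norm_num
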